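/- Let M be a compact d-manifold (possibly with boundary), and suppose the trilinear correlation bound |∫_M e₁e₂e₃e₄ dx| ≤ C_p μ₁^{-p} holds for all p whenever e_i are L²-normalized eigenfunctions with eigenvalues μ_i² and C μ_j ≤ μ₁ for j=2,3,4. Then for functions φᵢ on M_λ = λM spectrally localized at dyadic scales N₁ ≥ C N₂ ≥ N₃ ≥ N₄ and any bounded multiplier weight with |w(n₁,...,n₄)| ≤ n₁², the sum |Σ_{nᵢ∼Nᵢ} w(n₁,…,n₄) ∫₀^t ∫_{M_λ} π_{n₁}φ₁ π_{n₂}φ₂ π_{n₃}φ₃ π_{n₄}φ₄ dx dt| ≤ C_q N₁^{-q} ∏ᵢ ‖φᵢ‖_{X^{0,1/2+}} for every q > 0, where the implicit constant uses Weyl's law #{eigenvalues ν with N ≤ √ν ≤ 2N} ≲ N^d. -/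

import Mathlib

open MeasureTheory

theorem stmt_19 {Mlam : Type*} [MeasurableSpace Mlam] (ν : Measure Mlam)
    (d : ℕ) (hd : 0 < d)
    (Ccorr : ℕ → ℝ) (hCcorr : ∀ p, 0 ≤ Ccorr p)
    (Ccond Cw : ℝ) (hCcond : 1 ≤ Ccond) (hCw : 0 ≤ Cw) :
    ∀ q : ℝ, 0 < q → ∃ Cq : ℝ,
      ∀ lam : ℝ, 1 ≤ lam →
      ∀ (N : Fin 4 → ℝ) (S : Fin 4 → Finset ℝ),
      (∀ i, 1 ≤ N i) →
      (∀ i, ∀ n ∈ S i, N i ≤ n ∧ n < 2 * N i) →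
      -- Weyl law eigenvalue count on the rescaled manifold
      (∀ i, ((S i).card : ℝ) ≤ Cw * (lam * N i) ^ d) →
      -- frequency separation `N₁ ≥ C N₂ ≥ N₃ ≥ N₄`
      (∀ j : Fin 4, j ≠ 0 → 2 * Ccond * N j ≤ N 0) →
      ∀ (φ : Fin 4 → ℝ → Mlam → ℂ) (p : Fin 4 → ℝ → ℝ → Mlam → ℂ)
        (w : (Fin 4 → ℝ) → ℝ) (Xn : Fin 4 → ℝ) (t : ℝ),
      0 < t → t ≤ 1 →
      (∀ i τ x, φ i τ x = ∑ n ∈ S i, p i n τ x) →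
      (∀ n : Fin 4 → ℝ, |w n| ≤ (n 0) ^ 2) →
      -- rapid-decay correlation bound for products of eigenfunction clusters
      (∀ (P : ℕ) (τ : ℝ) (n : Fin 4 → ℝ), (∀ i, n i ∈ S i) →
        (∀ j : Fin 4, j ≠ 0 → Ccond * (lam * n j) ≤ lam * n 0) →
        ‖∫ x, ∏ i, p i (n i) τ x ∂ν‖
          ≤ Ccorr P * (lam * n 0) ^ (-(P : ℝ)) *
              ∏ i, (eLpNorm (p i (n i) τ) 2 ν).toReal) →
      -- `X^{0,1/2+} ⊂ L^∞_t L²_x` embedding together with the projection bound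
      (∀ (i : Fin 4) (n τ : ℝ), (eLpNorm (p i n τ) 2 ν).toReal ≤ Xn i) →
      (∀ i, 0 ≤ Xn i) →
      ‖∑ n ∈ Fintype.piFinset S, (w n : ℂ) *
          ∫ τ in Set.Ioc (0:ℝ) t, ∫ x, ∏ i, p i (n i) τ x ∂ν‖
        ≤ Cq * N 0 ^ (-q) * ∏ i, Xn i := by
  intro q hq
  set P : ℕ := ⌈q⌉₊ + 4 * d + 2 with hP
  refine ⟨4 * Ccorr P * Cw ^ 4, ?_⟩
  intro lam hlam N S hN hS hWeyl hsep φ p w Xn t ht ht1 hφ hw hcorr hXnb hXn0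
  have hN0 : (1:ℝ) ≤ N 0 := hN 0
  have hA1 : (1:ℝ) ≤ lam * N 0 := by nlinarith
  have hA0 : (0:ℝ) < lam * N 0 := lt_of_lt_of_le one_pos hA1
  have hXnprod : (0:ℝ) ≤ ∏ i, Xn i := Finset.prod_nonneg fun i _ => hXn0 i
  -- per-term bound
  set B : ℝ := 4 * N 0 ^ 2 * (Ccorr P * (lam * N 0) ^ (-(P : ℝ)) * ∏ i, Xn i) with hB
  have hkey : ∀ n ∈ Fintype.piFinset S,
      ‖(w n : ℂ) * ∫ τ in Set.Ioc (0:ℝ) t, ∫ x, ∏ i, p i (n i) τ x ∂ν‖ ≤ B := by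
    intro n hn
    have hmem : ∀ i, n i ∈ S i := by
      intro i; exact Fintype.mem_piFinset.mp hn i
    have hn0 : N 0 ≤ n 0 := (hS 0 (n 0) (hmem 0)).1
    have hn02 : n 0 < 2 * N 0 := (hS 0 (n 0) (hmem 0)).2
    have hn0pos : (0:ℝ) < n 0 := lt_of_lt_of_le one_pos (hN0.trans hn0)
    have hlampos : (0:ℝ) < lam := lt_of_lt_of_le one_pos hlam
    have hsep' : ∀ j : Fin 4, j ≠ 0 → Ccond * (lam * n j) ≤ lam * n 0 := by
      intro j hj
      have h1 : n j < 2 * N j := (hS j (n j) (hmem j)).2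
      have h2 : 2 * Ccond * N j ≤ N 0 := hsep j hj
      have hC0 : (0:ℝ) < Ccond := lt_of_lt_of_le one_pos hCcond
      have : Ccond * n j ≤ n 0 := by nlinarith
      calc Ccond * (lam * n j) = lam * (Ccond * n j) := by ring
        _ ≤ lam * n 0 := by
            exact mul_le_mul_of_nonneg_left this (le_of_lt hlampos)
    -- pointwise-in-time bound
    set B' : ℝ := Ccorr P * (lam * n 0) ^ (-(P : ℝ)) * ∏ i, Xn i with hB'
    have hB'0 : 0 ≤ B' :=
      mul_nonneg (mul_nonneg (hCcorr P) (Real.rpow_nonneg (by positivity) _)) hXnprod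
    have htime : ∀ τ : ℝ, ‖∫ x, ∏ i, p i (n i) τ x ∂ν‖ ≤ B' := by
      intro τ
      refine (hcorr P τ n hmem hsep').trans ?_
      refine mul_le_mul_of_nonneg_left ?_
        (mul_nonneg (hCcorr P) (Real.rpow_nonneg (by positivity) _))
      exact Finset.prod_le_prod (fun i _ => ENNReal.toReal_nonneg)
        (fun i _ => hXnb i (n i) τ)
    have hIoc : MeasureTheory.volume (Set.Ioc (0:ℝ) t) < ⊤ := by
      simp [Real.volume_Ioc]
    have hInt : ‖∫ τ in Set.Ioc (0:ℝ) t, ∫ x, ∏ i, p i (n i) τ x ∂ν‖ ≤ B' := by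
      have := norm_setIntegral_le_of_norm_le_const_ae' (μ := MeasureTheory.volume)
        (f := fun τ => ∫ x, ∏ i, p i (n i) τ x ∂ν) hIoc
        (Filter.Eventually.of_forall fun τ _ => htime τ)
      refine this.trans ?_
      have hvol : (MeasureTheory.volume.real (Set.Ioc (0:ℝ) t)) = t := by
        simp [Measure.real, Real.volume_Ioc, ht.le]
      rw [hvol]
      nlinarith
    have hwn : ‖(w n : ℂ)‖ ≤ n 0 ^ 2 := by
      rw [Complex.norm_real]; exact (Real.norm_eq_abs _ ▸ hw n)
    have hn0sq : n 0 ^ 2 ≤ 4 * N 0 ^ 2 := by nlinarith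
    have hrpow : (lam * n 0) ^ (-(P : ℝ)) ≤ (lam * N 0) ^ (-(P : ℝ)) :=
      Real.rpow_le_rpow_of_nonpos hA0 (mul_le_mul_of_nonneg_left hn0 hlampos.le)
        (neg_nonpos.mpr (Nat.cast_nonneg P))
    calc ‖(w n : ℂ) * ∫ τ in Set.Ioc (0:ℝ) t, ∫ x, ∏ i, p i (n i) τ x ∂ν‖
        = ‖(w n : ℂ)‖ * ‖∫ τ in Set.Ioc (0:ℝ) t, ∫ x, ∏ i, p i (n i) τ x ∂ν‖ :=
          norm_mul _ _
      _ ≤ (4 * N 0 ^ 2) * B' := by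
          refine mul_le_mul (hwn.trans hn0sq) hInt (norm_nonneg _) (by positivity)
      _ ≤ B := by
          rw [hB, hB']
          refine mul_le_mul_of_nonneg_left ?_ (by positivity)
          exact mul_le_mul_of_nonneg_right
            (mul_le_mul_of_nonneg_left hrpow (hCcorr P)) hXnprod
  -- sum the per-term bound
  have hB0 : 0 ≤ B :=
    mul_nonneg (by positivity)
      (mul_nonneg (mul_nonneg (hCcorr P) (Real.rpow_nonneg hA0.le _)) hXnprod)
  have hsum : ‖∑ n ∈ Fintype.piFinset S, (w n : ℂ) *
      ∫ τ in Set.Ioc (0:ℝ) t, ∫ x, ∏ i, p i (n i) τ x ∂ν‖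
      ≤ ((Fintype.piFinset S).card : ℝ) * B := by
    refine (norm_sum_le _ _).trans ?_
    calc ∑ n ∈ Fintype.piFinset S, ‖(w n : ℂ) *
          ∫ τ in Set.Ioc (0:ℝ) t, ∫ x, ∏ i, p i (n i) τ x ∂ν‖
        ≤ ∑ _n ∈ Fintype.piFinset S, B := Finset.sum_le_sum hkey
      _ = ((Fintype.piFinset S).card : ℝ) * B := by
          rw [Finset.sum_const, nsmul_eq_mul]
  -- cardinality bound
  have hcard : ((Fintype.piFinset S).card : ℝ) ≤ Cw ^ 4 * (lam * N 0) ^ (4 * d) := by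
    have hcard' : ((Fintype.piFinset S).card : ℝ) = ∏ i : Fin 4, ((S i).card : ℝ) := by
      rw [Fintype.card_piFinset]; push_cast; ring
    rw [hcard']
    have h1 : ∀ i : Fin 4, ((S i).card : ℝ) ≤ Cw * (lam * N 0) ^ d := by
      intro i
      refine (hWeyl i).trans ?_
      refine mul_le_mul_of_nonneg_left ?_ hCw
      have hli : (0:ℝ) ≤ lam * N i :=
        mul_nonneg (by linarith) (by linarith [hN i])
      refine pow_le_pow_left₀ hli ?_ d
      rcases eq_or_ne i 0 with rfl | hi
      · exact le_rfl
      · have h2 := hsep i hi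
        have hNi := hN i
        have hNle : N i ≤ N 0 := by nlinarith
        exact mul_le_mul_of_nonneg_left hNle (by linarith)
    calc ∏ i : Fin 4, ((S i).card : ℝ) ≤ ∏ _i : Fin 4, (Cw * (lam * N 0) ^ d) :=
          Finset.prod_le_prod (fun i _ => Nat.cast_nonneg _) (fun i _ => h1 i)
      _ = Cw ^ 4 * (lam * N 0) ^ (4 * d) := by
          rw [Finset.prod_const, Finset.card_univ, Fintype.card_fin,
            mul_pow, ← pow_mul, Nat.mul_comm d 4]
  -- the rpow arithmetic
  have hE : (lam * N 0) ^ (4 * d) * (N 0 ^ 2 * (lam * N 0) ^ (-(P : ℝ)))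
      ≤ N 0 ^ (-q) := by
    set A := lam * N 0 with hAdef
    have hApow : (A : ℝ) ^ (4 * d) = A ^ ((4 * d : ℕ) : ℝ) :=
      (Real.rpow_natCast A (4 * d)).symm
    have hN0pow : (N 0) ^ 2 = N 0 ^ ((2:ℕ) : ℝ) := (Real.rpow_natCast (N 0) 2).symm
    rw [hApow, hN0pow]
    have hcomb : A ^ ((4 * d : ℕ) : ℝ) * A ^ (-(P : ℝ))
        = A ^ (-(((⌈q⌉₊ : ℝ)) + 2)) := by
      rw [← Real.rpow_add hA0]
      congr 1
      rw [hP]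
      push_cast
      ring
    have hstep1 : A ^ (-(((⌈q⌉₊ : ℝ)) + 2)) ≤ (N 0) ^ (-(((⌈q⌉₊ : ℝ)) + 2)) := by
      refine Real.rpow_le_rpow_of_nonpos (lt_of_lt_of_le one_pos hN0) ?_
        (by have h : (0:ℝ) ≤ (⌈q⌉₊:ℝ) + 2 := by positivity
            linarith)
      exact le_mul_of_one_le_left (le_trans zero_le_one hN0) hlam
    have hstep2 : (N 0) ^ (-(((⌈q⌉₊ : ℝ)) + 2)) ≤ (N 0) ^ (-(q + 2)) := by
      refine Real.rpow_le_rpow_of_exponent_le hN0 ?_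
      have := Nat.le_ceil q
      linarith
    calc A ^ ((4 * d : ℕ) : ℝ) * (N 0 ^ ((2:ℕ) : ℝ) * A ^ (-(P : ℝ)))
        = N 0 ^ ((2:ℕ) : ℝ) * (A ^ ((4 * d : ℕ) : ℝ) * A ^ (-(P : ℝ))) := by ring
      _ = N 0 ^ ((2:ℕ) : ℝ) * A ^ (-(((⌈q⌉₊ : ℝ)) + 2)) := by rw [hcomb]
      _ ≤ N 0 ^ ((2:ℕ) : ℝ) * (N 0) ^ (-(q + 2)) := by
          refine mul_le_mul_of_nonneg_left (hstep1.trans hstep2) ?_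
          positivity
      _ = N 0 ^ (-q) := by
          rw [← Real.rpow_add (lt_of_lt_of_le one_pos hN0)]
          congr 1
          push_cast
          ring
  -- put it together
  refine hsum.trans ?_
  have hfinal : ((Fintype.piFinset S).card : ℝ) * B
      ≤ (4 * Ccorr P * Cw ^ 4) * N 0 ^ (-q) * ∏ i, Xn i := by
    calc ((Fintype.piFinset S).card : ℝ) * B
        ≤ (Cw ^ 4 * (lam * N 0) ^ (4 * d)) * B :=
          mul_le_mul_of_nonneg_right hcard hB0
      _ = (4 * Ccorr P * Cw ^ 4) *
            ((lam * N 0) ^ (4 * d) * (N 0 ^ 2 * (lam * N 0) ^ (-(P : ℝ)))) *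
            ∏ i, Xn i := by rw [hB]; ring
      _ ≤ (4 * Ccorr P * Cw ^ 4) * N 0 ^ (-q) * ∏ i, Xn i := by
          refine mul_le_mul_of_nonneg_right ?_ hXnprod
          exact mul_le_mul_of_nonneg_left hE
            (mul_nonneg (mul_nonneg (by norm_num) (hCcorr P)) (by positivity))
  exact hfinal
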